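/- Let a < b be real numbers and let f : (a,b) → ℝ be a differentiable function that is integrable on (a,b) and satisfies ∫_a^b (y−a)(b−y)|f′(y)|² dy < ∞. Then ∫_a^b |f(y) − (1/(b−a))∫_a^b f(z) dz|² dy ≤ (1/2) ∫_a^b (y−a)(b−y)|f′(y)|² dy. -/

import Mathlib

open MeasureTheory Set ENNReal

lemma sq_integral_le {ν : Measure ℝ} [IsFiniteMeasure ν] {h : ℝ → ℝ}
    (h1 : Integrable h ν) (h2 : Integrable (fun t => h t ^ 2) ν) :
    (∫ t, h t ∂ν) ^ 2 ≤ (ν univ).toReal * ∫ t, h t ^ 2 ∂ν := by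
  set M := (ν univ).toReal with hM
  have hM0 : 0 ≤ M := ENNReal.toReal_nonneg
  set S := ∫ t, h t ∂ν with hS
  set Q := ∫ t, h t ^ 2 ∂ν with hQ
  rcases eq_or_lt_of_le hM0 with h0 | hpos
  · have hν : ν = 0 := by
      rcases (ENNReal.toReal_eq_zero_iff _).mp h0.symm with h | h
      · exact Measure.measure_univ_eq_zero.mp h
      · exact absurd h (measure_ne_top ν univ)
    simp [hS, hQ, hν]
  · have key : 0 ≤ ∫ t, (M * h t - S) ^ 2 ∂ν := integral_nonneg fun t => sq_nonneg _
    have expand : ∫ t, (M * h t - S) ^ 2 ∂ν = M^2 * Q - 2 * M * S * S + S^2 * M := by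
      have e : ∀ t, (M * h t - S) ^ 2 = M^2 * h t ^ 2 - (2 * M * S) * h t + S^2 := by
        intro t; ring
      simp_rw [e]
      have i1 : Integrable (fun t => M ^ 2 * h t ^ 2 - 2 * M * S * h t) ν := by
        exact (h2.const_mul (M^2)).sub (h1.const_mul (2*M*S))
      rw [integral_add i1 (integrable_const _),
        integral_sub (h2.const_mul (M^2)) (h1.const_mul (2*M*S)), integral_const_mul, integral_const_mul,
        integral_const]
      simp [hM, smul_eq_mul, hS, hQ, measureReal_def]; ring
    nlinarith [key, expand]

noncomputable def PhiK (g : ℝ → ℝ) (x y t : ℝ) : ℝ≥0∞ :=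
  if min x y < t ∧ t ≤ max x y then ENNReal.ofReal (|x - y| * g t) else 0

lemma PhiK_meas {g : ℝ → ℝ} (hg : Measurable g) :
    Measurable (fun p : ℝ × ℝ × ℝ => PhiK g p.1 p.2.1 p.2.2) := by
  unfold PhiK
  apply Measurable.ite
  · exact MeasurableSet.inter
      (measurableSet_lt (measurable_fst.min measurable_snd.fst) measurable_snd.snd)
      (measurableSet_le measurable_snd.snd (measurable_fst.max measurable_snd.fst))
  · exact ((measurable_fst.sub measurable_snd.fst).abs.mul (hg.comp measurable_snd.snd)).ennreal_ofReal
  · exact measurable_const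

lemma PhiK_comm (g : ℝ → ℝ) (x y t : ℝ) : PhiK g x y t = PhiK g y x t := by
  unfold PhiK
  rw [min_comm, max_comm, abs_sub_comm]

lemma innerA {a b t x : ℝ} (g : ℝ → ℝ) (hg0 : ∀ s, 0 ≤ g s) (ht : t ∈ Ioo a b) (hx : t ≤ x) :
    ∫⁻ y in Ioo a b, PhiK g x y t
      = ENNReal.ofReal ((x * (t - a) - (t ^ 2 - a ^ 2) / 2) * g t) := by
  obtain ⟨hat, htb⟩ := ht
  have step1 : ∀ y ∈ Ioo a b, PhiK g x y t
      = (Ioo a t).indicator (fun y => ENNReal.ofReal ((x - y) * g t)) y := by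
    intro y hy
    by_cases hyt : y < t
    · rw [indicator_of_mem (show y ∈ Ioo a t from ⟨hy.1, hyt⟩)]
      rw [PhiK, if_pos ⟨lt_of_le_of_lt (min_le_right x y) hyt, le_trans hx (le_max_left x y)⟩,
        abs_of_nonneg (by linarith : (0:ℝ) ≤ x - y)]
    · rw [indicator_of_notMem (fun hc => hyt hc.2), PhiK, if_neg]
      rintro ⟨h1, -⟩
      exact absurd h1 (not_lt.mpr (le_min hx (not_lt.mp hyt)))
  calc ∫⁻ y in Ioo a b, PhiK g x y t
      = ∫⁻ y in Ioo a b, (Ioo a t).indicator (fun y => ENNReal.ofReal ((x - y) * g t)) y :=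
        setLIntegral_congr_fun measurableSet_Ioo step1
    _ = ∫⁻ y in Ioo a t, ENNReal.ofReal ((x - y) * g t) := by
        rw [lintegral_indicator measurableSet_Ioo, Measure.restrict_restrict measurableSet_Ioo,
          inter_eq_left.mpr (Ioo_subset_Ioo le_rfl htb.le)]
    _ = ENNReal.ofReal (∫ y in Ioo a t, (x - y) * g t) := by
        rw [← ofReal_integral_eq_lintegral_ofReal]
        · exact (((continuous_const.sub continuous_id).mul
            continuous_const).integrableOn_Icc).mono_set Ioo_subset_Icc_self
        · exact (ae_restrict_iff' measurableSet_Ioo).mpr (ae_of_all _ fun y hy =>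
            mul_nonneg (by linarith [hy.2] : (0:ℝ) ≤ x - y) (hg0 t))
    _ = ENNReal.ofReal ((x * (t - a) - (t ^ 2 - a ^ 2) / 2) * g t) := by
        congr 1
        rw [MeasureTheory.integral_mul_const]
        congr 1
        have h1 : IntervalIntegrable (fun _ : ℝ => x) volume a t :=
          continuous_const.intervalIntegrable _ _
        have h2 : IntervalIntegrable (fun y : ℝ => y) volume a t :=
          continuous_id.intervalIntegrable _ _
        rw [← integral_Ioc_eq_integral_Ioo, ← intervalIntegral.integral_of_le hat.le,
          intervalIntegral.integral_sub h1 h2,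
          intervalIntegral.integral_const, integral_id]
        simp [smul_eq_mul]
        ring

lemma innerB {a b t x : ℝ} (g : ℝ → ℝ) (hg0 : ∀ s, 0 ≤ g s) (ht : t ∈ Ioo a b) (hx : x < t) :
    ∫⁻ y in Ioo a b, PhiK g x y t
      = ENNReal.ofReal (((b ^ 2 - t ^ 2) / 2 - x * (b - t)) * g t) := by
  obtain ⟨hat, htb⟩ := ht
  have step1 : ∀ y ∈ Ioo a b, PhiK g x y t
      = (Ico t b).indicator (fun y => ENNReal.ofReal ((y - x) * g t)) y := by
    intro y hy
    by_cases hyt : t ≤ y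
    · rw [indicator_of_mem (show y ∈ Ico t b from ⟨hyt, hy.2⟩)]
      rw [PhiK, if_pos ⟨lt_of_le_of_lt (min_le_left x y) hx, le_trans hyt (le_max_right x y)⟩,
        abs_sub_comm, abs_of_nonneg (by linarith : (0:ℝ) ≤ y - x)]
    · rw [indicator_of_notMem (fun hc => hyt hc.1), PhiK, if_neg]
      rintro ⟨-, h2⟩
      exact absurd h2 (not_le.mpr (max_lt hx (not_le.mp hyt)))
  calc ∫⁻ y in Ioo a b, PhiK g x y t
      = ∫⁻ y in Ioo a b, (Ico t b).indicator (fun y => ENNReal.ofReal ((y - x) * g t)) y :=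
        setLIntegral_congr_fun measurableSet_Ioo step1
    _ = ∫⁻ y in Ico t b, ENNReal.ofReal ((y - x) * g t) := by
        rw [lintegral_indicator measurableSet_Ico, Measure.restrict_restrict measurableSet_Ico,
          inter_eq_left.mpr (fun y hy => show y ∈ Ioo a b from ⟨lt_of_lt_of_le hat hy.1, hy.2⟩)]
    _ = ENNReal.ofReal (∫ y in Ico t b, (y - x) * g t) := by
        rw [← ofReal_integral_eq_lintegral_ofReal]
        · exact (((continuous_id.sub continuous_const).mul
            continuous_const).integrableOn_Icc).mono_set Ico_subset_Icc_self
        · exact (ae_restrict_iff' measurableSet_Ico).mpr (ae_of_all _ fun y hy =>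
            mul_nonneg (by linarith [hy.1] : (0:ℝ) ≤ y - x) (hg0 t))
    _ = ENNReal.ofReal (((b ^ 2 - t ^ 2) / 2 - x * (b - t)) * g t) := by
        congr 1
        rw [MeasureTheory.integral_mul_const]
        congr 1
        have h1 : IntervalIntegrable (fun _ : ℝ => x) volume t b :=
          continuous_const.intervalIntegrable _ _
        have h2 : IntervalIntegrable (fun y : ℝ => y) volume t b :=
          continuous_id.intervalIntegrable _ _
        rw [MeasureTheory.integral_Ico_eq_integral_Ioo, ← integral_Ioc_eq_integral_Ioo,
          ← intervalIntegral.integral_of_le htb.le,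
          intervalIntegral.integral_sub h2 h1,
          intervalIntegral.integral_const, integral_id]
        simp [smul_eq_mul]
        ring
lemma inner2_zero {a b t : ℝ} (g : ℝ → ℝ) (ht : t ∉ Ioo a b) :
    ∫⁻ x in Ioo a b, ∫⁻ y in Ioo a b, PhiK g x y t = 0 := by
  have h : ∀ x ∈ Ioo a b, (∫⁻ y in Ioo a b, PhiK g x y t) = 0 := by
    intro x hx
    have : ∀ y ∈ Ioo a b, PhiK g x y t = 0 := by
      intro y hy
      rw [PhiK, if_neg]
      rintro ⟨h1, h2⟩
      exact ht ⟨lt_of_le_of_lt (le_min hx.1.le hy.1.le) h1,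
        lt_of_le_of_lt h2 (max_lt hx.2 hy.2)⟩
    rw [setLIntegral_congr_fun measurableSet_Ioo this, lintegral_zero]
  rw [setLIntegral_congr_fun measurableSet_Ioo h, lintegral_zero]

lemma inner2_eq {a b t : ℝ} (g : ℝ → ℝ) (hg0 : ∀ s, 0 ≤ g s) (ht : t ∈ Ioo a b) :
    ∫⁻ x in Ioo a b, ∫⁻ y in Ioo a b, PhiK g x y t
      = ENNReal.ofReal ((b - a) * ((t - a) * (b - t) * g t)) := by
  obtain ⟨hat, htb⟩ := ht
  have hdisj : Disjoint (Ioo a t) (Ico t b) := by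
    rw [Set.disjoint_left]
    rintro y hy1 hy2
    exact absurd hy1.2 (not_lt.mpr hy2.1)
  have hsplit : ∫⁻ x in Ioo a b, ∫⁻ y in Ioo a b, PhiK g x y t
      = (∫⁻ x in Ioo a t, ∫⁻ y in Ioo a b, PhiK g x y t)
        + ∫⁻ x in Ico t b, ∫⁻ y in Ioo a b, PhiK g x y t := by
    rw [← lintegral_union measurableSet_Ico hdisj, Ioo_union_Ico_eq_Ioo hat htb.le]
  have piece1 : (∫⁻ x in Ioo a t, ∫⁻ y in Ioo a b, PhiK g x y t)
      = ENNReal.ofReal (((t - a) * (b ^ 2 - t ^ 2) / 2 - (t ^ 2 - a ^ 2) / 2 * (b - t)) * g t) := by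
    have e1 : ∀ x ∈ Ioo a t, (∫⁻ y in Ioo a b, PhiK g x y t)
        = ENNReal.ofReal (((b ^ 2 - t ^ 2) / 2 - x * (b - t)) * g t) :=
      fun x hx => innerB g hg0 ⟨hat, htb⟩ hx.2
    rw [setLIntegral_congr_fun measurableSet_Ioo e1,
      ← ofReal_integral_eq_lintegral_ofReal]
    · congr 1
      rw [MeasureTheory.integral_mul_const]
      congr 1
      have h1 : IntervalIntegrable (fun _ : ℝ => (b ^ 2 - t ^ 2) / 2) volume a t :=
        continuous_const.intervalIntegrable _ _
      have h2 : IntervalIntegrable (fun y : ℝ => y * (b - t)) volume a t :=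
        (continuous_id.mul continuous_const).intervalIntegrable _ _
      rw [← integral_Ioc_eq_integral_Ioo, ← intervalIntegral.integral_of_le hat.le,
        intervalIntegral.integral_sub h1 h2, intervalIntegral.integral_const,
        intervalIntegral.integral_mul_const, integral_id]
      simp [smul_eq_mul]
      ring
    · exact ((continuous_const.sub (continuous_id.mul continuous_const)).mul
        continuous_const).integrableOn_Icc.mono_set Ioo_subset_Icc_self
    · refine (ae_restrict_iff' measurableSet_Ioo).mpr (ae_of_all _ fun x hx => ?_)
      refine mul_nonneg ?_ (hg0 t)
      nlinarith [hx.2, htb, mul_nonneg (sub_nonneg.mpr hx.2.le) (sub_nonneg.mpr htb.le),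
        sq_nonneg (b - t)]
  have piece2 : (∫⁻ x in Ico t b, ∫⁻ y in Ioo a b, PhiK g x y t)
      = ENNReal.ofReal (((b ^ 2 - t ^ 2) / 2 * (t - a) - (t ^ 2 - a ^ 2) / 2 * (b - t)) * g t) := by
    have e1 : ∀ x ∈ Ico t b, (∫⁻ y in Ioo a b, PhiK g x y t)
        = ENNReal.ofReal ((x * (t - a) - (t ^ 2 - a ^ 2) / 2) * g t) :=
      fun x hx => innerA g hg0 ⟨hat, htb⟩ hx.1
    rw [setLIntegral_congr_fun measurableSet_Ico e1,
      ← ofReal_integral_eq_lintegral_ofReal]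
    · congr 1
      rw [MeasureTheory.integral_mul_const]
      congr 1
      have h1 : IntervalIntegrable (fun _ : ℝ => (t ^ 2 - a ^ 2) / 2) volume t b :=
        continuous_const.intervalIntegrable _ _
      have h2 : IntervalIntegrable (fun y : ℝ => y * (t - a)) volume t b :=
        (continuous_id.mul continuous_const).intervalIntegrable _ _
      rw [MeasureTheory.integral_Ico_eq_integral_Ioo, ← integral_Ioc_eq_integral_Ioo,
        ← intervalIntegral.integral_of_le htb.le,
        intervalIntegral.integral_sub h2 h1, intervalIntegral.integral_const,
        intervalIntegral.integral_mul_const, integral_id]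
      simp [smul_eq_mul]
      ring
    · exact (((continuous_id.mul continuous_const).sub continuous_const).mul
        continuous_const).integrableOn_Icc.mono_set Ico_subset_Icc_self
    · refine (ae_restrict_iff' measurableSet_Ico).mpr (ae_of_all _ fun x hx => ?_)
      refine mul_nonneg ?_ (hg0 t)
      nlinarith [hx.1, hat, mul_nonneg (sub_nonneg.mpr hx.1) (sub_nonneg.mpr hat.le),
        sq_nonneg (t - a)]
  rw [hsplit, piece1, piece2, ← ENNReal.ofReal_add]
  · congr 1
    ring
  · refine mul_nonneg ?_ (hg0 t)
    nlinarith [mul_nonneg (mul_nonneg (sub_nonneg.mpr hat.le) (sub_nonneg.mpr htb.le))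
      (sub_nonneg.mpr (hat.trans htb).le)]
  · refine mul_nonneg ?_ (hg0 t)
    nlinarith [mul_nonneg (mul_nonneg (sub_nonneg.mpr hat.le) (sub_nonneg.mpr htb.le))
      (sub_nonneg.mpr (hat.trans htb).le)]
-- Tonelli: swap the t-integral outside
lemma T_swapped {a b : ℝ} (g : ℝ → ℝ) (hg : Measurable g) :
    (∫⁻ x in Ioo a b, ∫⁻ y in Ioo a b, ∫⁻ t, PhiK g x y t)
      = ∫⁻ t, ∫⁻ x in Ioo a b, ∫⁻ y in Ioo a b, PhiK g x y t := by
  have swap1 : ∀ x : ℝ, (∫⁻ y in Ioo a b, ∫⁻ t, PhiK g x y t)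
      = ∫⁻ t, ∫⁻ y in Ioo a b, PhiK g x y t := by
    intro x
    exact lintegral_lintegral_swap
      (((PhiK_meas hg).comp (measurable_const.prodMk measurable_id)).aemeasurable)
  rw [lintegral_congr swap1]
  exact lintegral_lintegral_swap
    (((PhiK_meas hg).comp ((measurable_fst.fst).prodMk
      ((measurable_snd).prodMk (measurable_fst.snd)))).lintegral_prod_right'.aemeasurable)

/-- Poincaré-type inequality with optimal constant on a bounded interval. -/
theorem poincare_type_inequality (a b : ℝ) (hab : a < b) (f f' : ℝ → ℝ)
    (hderiv : ∀ y ∈ Ioo a b, HasDerivAt f (f' y) y)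
    (hf_int : IntegrableOn f (Ioo a b))
    (hf'_int : IntegrableOn (fun y => (y - a) * (b - y) * |f' y| ^ 2) (Ioo a b)) :
    ∫ y in Ioo a b, |f y - (1 / (b - a)) * ∫ z in Ioo a b, f z| ^ 2
      ≤ (1 / 2) * ∫ y in Ioo a b, (y - a) * (b - y) * |f' y| ^ 2 := by
  have hL : (0:ℝ) < b - a := sub_pos.mpr hab
  haveI hfin : IsFiniteMeasure (volume.restrict (Ioo a b)) :=
    ⟨by rw [Measure.restrict_apply_univ, Real.volume_Ioo]; exact ofReal_lt_top⟩
  set g : ℝ → ℝ := fun t => (deriv f t) ^ 2 with hgdef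
  have hgm : Measurable g := (measurable_deriv f).pow_const 2
  have hg0 : ∀ s, 0 ≤ g s := fun s => sq_nonneg _
  have hgf : ∀ t ∈ Ioo a b, g t = f' t ^ 2 := fun t ht => by
    show deriv f t ^ 2 = f' t ^ 2; rw [(hderiv t ht).deriv]
  set W : ℝ := ∫ y in Ioo a b, (y - a) * (b - y) * |f' y| ^ 2 with hWdef
  set S : ℝ := ∫ z in Ioo a b, f z with hSdef
  have hW0 : 0 ≤ W := by
    rw [hWdef]
    refine setIntegral_nonneg measurableSet_Ioo fun y hy => ?_
    exact mul_nonneg (mul_nonneg (by linarith [hy.1] : (0:ℝ) ≤ y - a)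
      (by linarith [hy.2] : (0:ℝ) ≤ b - y)) (sq_nonneg _)
  -- pointwise bound : main CS/FTC step
  have key : ∀ x ∈ Ioo a b, ∀ y ∈ Ioo a b, y ≤ x →
      ENNReal.ofReal ((f x - f y) ^ 2) ≤ ∫⁻ t, PhiK g x y t := by
    intro x hx y hy hyx
    have hIccsub : Icc y x ⊆ Ioo a b :=
      fun t htt => ⟨lt_of_lt_of_le hy.1 htt.1, lt_of_le_of_lt htt.2 hx.2⟩
    have hc : (0:ℝ) < (y - a) * (b - x) :=
      mul_pos (by linarith [hy.1]) (by linarith [hx.2])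
    have hsq : IntegrableOn (fun t => f' t ^ 2) (Icc y x) := by
      refine Integrable.mono' ((hf'_int.mono_set hIccsub).const_mul (((y - a) * (b - x))⁻¹))
        (hgm.aestronglyMeasurable.congr ((ae_restrict_iff' measurableSet_Icc).mpr
          (ae_of_all _ fun t htt => hgf t (hIccsub htt))))
        ((ae_restrict_iff' measurableSet_Icc).mpr (ae_of_all _ fun t htt => ?_))
      have hcw : (y - a) * (b - x) ≤ (t - a) * (b - t) :=
        mul_le_mul (by linarith [htt.1]) (by linarith [htt.2]) (by linarith [hx.2])
          (by linarith [hy.1, htt.1])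
      rw [Real.norm_eq_abs, abs_of_nonneg (sq_nonneg _), sq_abs]
      nlinarith [mul_nonneg (mul_nonneg (inv_nonneg.mpr hc.le) (sub_nonneg.mpr hcw))
        (sq_nonneg (f' t)), inv_mul_cancel₀ hc.ne', sq_nonneg (f' t)]
    have hL1 : IntegrableOn f' (Icc y x) := by
      have hbint : IntegrableOn (fun t => 1 + f' t ^ 2) (Icc y x) :=
        (integrableOn_const (by rw [Real.volume_Icc]; exact ofReal_ne_top)).add hsq
      refine Integrable.mono' hbint
        ((measurable_deriv f).aestronglyMeasurable.congr ((ae_restrict_iff' measurableSet_Icc).mpr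
          (ae_of_all _ fun t htt => (hderiv t (hIccsub htt)).deriv)))
        ((ae_restrict_iff' measurableSet_Icc).mpr (ae_of_all _ fun t htt => ?_))
      rw [Real.norm_eq_abs]
      nlinarith [sq_abs (f' t), abs_nonneg (f' t), sq_nonneg (|f' t| - 1)]
    have hftc : f x - f y = ∫ t in Ioc y x, f' t := by
      have hde : ∀ t ∈ uIcc y x, HasDerivAt f (f' t) t := by
        intro t htt
        rw [uIcc_of_le hyx] at htt
        exact hderiv t (hIccsub htt)
      have hii : IntervalIntegrable f' volume y x := by
        rw [intervalIntegrable_iff, uIoc_of_le hyx]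
        exact hL1.mono_set Ioc_subset_Icc_self
      rw [← intervalIntegral.integral_of_le hyx]
      exact (intervalIntegral.integral_eq_sub_of_hasDerivAt hde hii).symm
    have hmin : min x y = y := min_eq_right hyx
    have hmax : max x y = x := max_eq_left hyx
    have hphi : ∀ t : ℝ, PhiK g x y t
        = (Ioc y x).indicator (fun t => ENNReal.ofReal ((x - y) * g t)) t := by
      intro t
      by_cases htt : t ∈ Ioc y x
      · rw [indicator_of_mem htt, PhiK, hmin, hmax, if_pos (mem_Ioc.mp htt),
          abs_of_nonneg (by linarith : (0:ℝ) ≤ x - y)]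
      · rw [indicator_of_notMem htt, PhiK, hmin, hmax,
          if_neg (fun hcc => htt (mem_Ioc.mpr hcc))]
    rw [lintegral_congr hphi, lintegral_indicator measurableSet_Ioc]
    have hval : (∫⁻ t in Ioc y x, ENNReal.ofReal ((x - y) * g t))
        = ENNReal.ofReal (∫ t in Ioc y x, (x - y) * f' t ^ 2) := by
      rw [setLIntegral_congr_fun measurableSet_Ioc (fun t htt => by
          beta_reduce; rw [hgf t (hIccsub (Ioc_subset_Icc_self htt))]),
        ← ofReal_integral_eq_lintegral_ofReal
          ((hsq.mono_set Ioc_subset_Icc_self).const_mul (x - y))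
          ((ae_restrict_iff' measurableSet_Ioc).mpr (ae_of_all _ fun t _ =>
            mul_nonneg (by linarith) (sq_nonneg _)))]
    rw [hval]
    apply ENNReal.ofReal_le_ofReal
    rw [MeasureTheory.integral_const_mul, hftc]
    haveI : IsFiniteMeasure (volume.restrict (Ioc y x)) :=
      ⟨by rw [Measure.restrict_apply_univ, Real.volume_Ioc]; exact ofReal_lt_top⟩
    have hcs := sq_integral_le (ν := volume.restrict (Ioc y x))
      (hL1.mono_set Ioc_subset_Icc_self) (hsq.mono_set Ioc_subset_Icc_self)
    rwa [Measure.restrict_apply_univ, Real.volume_Ioc,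
      ENNReal.toReal_ofReal (by linarith : (0:ℝ) ≤ x - y)] at hcs
  have hpoint : ∀ x ∈ Ioo a b, ∀ y ∈ Ioo a b,
      ENNReal.ofReal ((f x - f y) ^ 2) ≤ ∫⁻ t, PhiK g x y t := by
    intro x hx y hy
    rcases le_total y x with h | h
    · exact key x hx y hy h
    · have h2 := key y hy x hx h
      have e1 : (f x - f y) ^ 2 = (f y - f x) ^ 2 := by ring
      have e2 : (∫⁻ t, PhiK g x y t) = ∫⁻ t, PhiK g y x t :=
        lintegral_congr fun t => PhiK_comm g x y t
      rw [e1, e2]; exact h2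
  -- value of T
  have hTval : (∫⁻ x in Ioo a b, ∫⁻ y in Ioo a b, ∫⁻ t, PhiK g x y t)
      = ENNReal.ofReal ((b - a) * W) := by
    rw [T_swapped g hgm]
    have h1 : ∀ t : ℝ, (∫⁻ x in Ioo a b, ∫⁻ y in Ioo a b, PhiK g x y t)
        = (Ioo a b).indicator
            (fun t => ENNReal.ofReal ((b - a) * ((t - a) * (b - t) * g t))) t := by
      intro t
      by_cases ht : t ∈ Ioo a b
      · rw [indicator_of_mem ht, inner2_eq g hg0 ht]
      · rw [indicator_of_notMem ht, inner2_zero g ht]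
    rw [lintegral_congr h1, lintegral_indicator measurableSet_Ioo,
      setLIntegral_congr_fun measurableSet_Ioo (fun t ht => by
        beta_reduce; rw [hgf t ht, sq_abs] :
          EqOn (fun t => ENNReal.ofReal ((b - a) * ((t - a) * (b - t) * g t)))
            (fun t => ENNReal.ofReal ((b - a) * ((t - a) * (b - t) * |f' t| ^ 2))) (Ioo a b)),
      ← ofReal_integral_eq_lintegral_ofReal (hf'_int.const_mul (b - a))
        ((ae_restrict_iff' measurableSet_Ioo).mpr (ae_of_all _ fun t ht => by
          simp only [Pi.zero_apply]
          exact mul_nonneg hL.le (mul_nonneg (mul_nonneg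
            (by linarith [ht.1] : (0:ℝ) ≤ t - a)
            (by linarith [ht.2] : (0:ℝ) ≤ b - t)) (sq_nonneg _))))]
    rw [MeasureTheory.integral_const_mul]
  -- upper bound for the double integral
  have hD2T : (∫⁻ x in Ioo a b, ∫⁻ y in Ioo a b, ENNReal.ofReal ((f x - f y) ^ 2))
      ≤ ENNReal.ofReal ((b - a) * W) := by
    rw [← hTval]
    refine lintegral_mono_ae ?_
    filter_upwards [ae_restrict_mem measurableSet_Ioo] with x hx
    refine lintegral_mono_ae ?_
    filter_upwards [ae_restrict_mem measurableSet_Ioo] with y hy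
    exact hpoint x hx y hy
  -- f is square integrable
  have hQint : IntegrableOn (fun y => f y ^ 2) (Ioo a b) := by
    obtain ⟨f₀, hf₀m, hff₀⟩ : ∃ f₀ : ℝ → ℝ, Measurable f₀ ∧ f =ᵐ[volume.restrict (Ioo a b)] f₀ :=
      ⟨hf_int.aemeasurable.mk f, hf_int.aemeasurable.measurable_mk, hf_int.aemeasurable.ae_eq_mk⟩
    have hD2' : (∫⁻ x in Ioo a b, ∫⁻ y in Ioo a b, ENNReal.ofReal ((f₀ x - f₀ y) ^ 2)) ≠ ⊤ := by
      have heq : (∫⁻ x in Ioo a b, ∫⁻ y in Ioo a b, ENNReal.ofReal ((f₀ x - f₀ y) ^ 2))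
          = ∫⁻ x in Ioo a b, ∫⁻ y in Ioo a b, ENNReal.ofReal ((f x - f y) ^ 2) := by
        refine lintegral_congr_ae ?_
        filter_upwards [hff₀] with x hx
        refine lintegral_congr_ae ?_
        filter_upwards [hff₀] with y hy
        rw [hx, hy]
      rw [heq]
      exact (lt_of_le_of_lt hD2T ofReal_lt_top).ne
    have hmeasInner : Measurable fun x => ∫⁻ y in Ioo a b, ENNReal.ofReal ((f₀ x - f₀ y) ^ 2) :=
      Measurable.lintegral_prod_right'
        (f := fun p : ℝ × ℝ => ENNReal.ofReal ((f₀ p.1 - f₀ p.2) ^ 2))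
        (((hf₀m.comp measurable_fst).sub (hf₀m.comp measurable_snd)).pow_const 2).ennreal_ofReal
    have hae := ae_lt_top hmeasInner hD2'
    haveI : (ae (volume.restrict (Ioo a b))).NeBot := by
      refine ae_neBot.mpr fun hcon => ?_
      rw [Measure.restrict_eq_zero, Real.volume_Ioo] at hcon
      exact absurd hcon (by simp [hL, not_le.mpr hL])
    obtain ⟨x₀, hx₀⟩ := hae.exists
    have hint0 : Integrable (fun y => (f₀ x₀ - f₀ y) ^ 2) (volume.restrict (Ioo a b)) := by
      refine ⟨((measurable_const.sub hf₀m).pow_const 2).aestronglyMeasurable, ?_⟩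
      rw [hasFiniteIntegral_iff_ofReal (ae_of_all _ fun y => sq_nonneg _)]
      exact hx₀
    have hQ0 : Integrable (fun y => f₀ y ^ 2) (volume.restrict (Ioo a b)) := by
      refine Integrable.mono' ((hint0.const_mul 2).add (integrable_const (2 * f₀ x₀ ^ 2)))
        (hf₀m.pow_const 2).aestronglyMeasurable (ae_of_all _ fun y => ?_)
      simp only [Pi.add_apply]
      rw [Real.norm_eq_abs, abs_of_nonneg (sq_nonneg _)]
      nlinarith [sq_nonneg (f₀ y - 2 * f₀ x₀)]
    exact hQ0.congr (by filter_upwards [hff₀] with y hy; rw [hy])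
  set Q : ℝ := ∫ y in Ioo a b, f y ^ 2 with hQdef
  have hM : ((volume.restrict (Ioo a b)) univ).toReal = b - a := by
    rw [Measure.restrict_apply_univ, Real.volume_Ioo, ENNReal.toReal_ofReal hL.le]
  have hxint : ∀ x : ℝ, Integrable (fun y => (f x - f y) ^ 2) (volume.restrict (Ioo a b)) := by
    intro x
    have e : (fun y => (f x - f y) ^ 2) = fun y => (f x ^ 2 - (2 * f x) * f y) + f y ^ 2 := by
      funext y; ring
    rw [e]
    exact ((integrable_const _).sub (hf_int.const_mul (2 * f x))).add hQint
  have hinner : ∀ x : ℝ, (∫ y in Ioo a b, (f x - f y) ^ 2)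
      = (b - a) * f x ^ 2 - (2 * S) * f x + Q := by
    intro x
    have e : ∀ y : ℝ, (f x - f y) ^ 2 = (f x ^ 2 - (2 * f x) * f y) + f y ^ 2 := fun y => by ring
    simp_rw [e]
    have i1 : Integrable (fun y => f x ^ 2 - (2 * f x) * f y) (volume.restrict (Ioo a b)) :=
      (integrable_const _).sub (hf_int.const_mul (2 * f x))
    rw [integral_add i1 hQint, integral_sub (integrable_const _) (hf_int.const_mul (2 * f x)),
      MeasureTheory.integral_const_mul, integral_const, measureReal_def, hM, smul_eq_mul, ← hSdef, ← hQdef]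
    ring
  have hintout : Integrable (fun x => (b - a) * f x ^ 2 - (2 * S) * f x + Q)
      (volume.restrict (Ioo a b)) :=
    ((hQint.const_mul (b - a)).sub (hf_int.const_mul (2 * S))).add (integrable_const Q)
  have hD2val : (∫⁻ x in Ioo a b, ∫⁻ y in Ioo a b, ENNReal.ofReal ((f x - f y) ^ 2))
      = ENNReal.ofReal (2 * (b - a) * Q - 2 * S ^ 2) := by
    have h1 : ∀ x : ℝ, (∫⁻ y in Ioo a b, ENNReal.ofReal ((f x - f y) ^ 2))
        = ENNReal.ofReal ((b - a) * f x ^ 2 - (2 * S) * f x + Q) := by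
      intro x
      rw [← ofReal_integral_eq_lintegral_ofReal (hxint x) (ae_of_all _ fun y => sq_nonneg _),
        hinner x]
    rw [lintegral_congr h1,
      ← ofReal_integral_eq_lintegral_ofReal hintout (ae_of_all _ fun x => by
        simp only [Pi.zero_apply]
        rw [← hinner x]; exact integral_nonneg fun y => sq_nonneg _)]
    congr 1
    have i2 : Integrable (fun x => (b - a) * f x ^ 2 - (2 * S) * f x)
        (volume.restrict (Ioo a b)) := (hQint.const_mul (b - a)).sub (hf_int.const_mul (2 * S))
    rw [integral_add i2 (integrable_const Q),
      integral_sub (hQint.const_mul (b - a)) (hf_int.const_mul (2 * S)),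
      MeasureTheory.integral_const_mul, MeasureTheory.integral_const_mul,
      integral_const, measureReal_def, hM, smul_eq_mul, ← hSdef, ← hQdef]
    ring
  have hkey : 2 * (b - a) * Q - 2 * S ^ 2 ≤ (b - a) * W := by
    rw [hD2val] at hD2T
    exact (ENNReal.ofReal_le_ofReal_iff (mul_nonneg hL.le hW0)).mp hD2T
  -- final computation
  have hlhs : (∫ y in Ioo a b, |f y - 1 / (b - a) * S| ^ 2)
      = Q - (2 * (1 / (b - a) * S)) * S + (b - a) * (1 / (b - a) * S) ^ 2 := by
    have e : ∀ y : ℝ, |f y - 1 / (b - a) * S| ^ 2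
        = (f y ^ 2 - (2 * (1 / (b - a) * S)) * f y) + (1 / (b - a) * S) ^ 2 := fun y => by
      rw [sq_abs]; ring
    simp_rw [e]
    have i1 : Integrable (fun y => f y ^ 2 - (2 * (1 / (b - a) * S)) * f y)
        (volume.restrict (Ioo a b)) := hQint.sub (hf_int.const_mul _)
    rw [integral_add i1 (integrable_const _),
      integral_sub hQint (hf_int.const_mul _),
      MeasureTheory.integral_const_mul, integral_const, measureReal_def, hM, smul_eq_mul]
    try rw [← hSdef]
    try rw [← hQdef]
    try ring
  rw [hlhs]
  have hmv : (1 / (b - a) * S) * (b - a) = S := by field_simp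
  have h4 : (Q - (2 * (1 / (b - a) * S)) * S + (b - a) * (1 / (b - a) * S) ^ 2) * (2 * (b - a))
      ≤ (1 / 2 * W) * (2 * (b - a)) := by
    have h5 : (1 / (b - a) * S) * S * (b - a) = S * S := by
      calc (1 / (b - a) * S) * S * (b - a) = ((1 / (b - a) * S) * (b - a)) * S := by ring
        _ = S * S := by rw [hmv]
    have h6 : (1 / (b - a) * S) ^ 2 * (b - a) ^ 2 = S ^ 2 := by
      calc (1 / (b - a) * S) ^ 2 * (b - a) ^ 2 = ((1 / (b - a) * S) * (b - a)) ^ 2 := by ring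
        _ = S ^ 2 := by rw [hmv]
    nlinarith [hkey, h5, h6]
  exact le_of_mul_le_mul_right h4 (by linarith)
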